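/- Let p ≥ 3 be a prime and k ∈ ℕ₊, and suppose the sequence (ν_p(A_{p,k}(n)))_{n∈ℕ} is eventually constant and equal to 1. If (p−1) | k, then p ∤ k. -/

import Mathlib

open PowerSeries Finset

/-- The number of digits equal to `i` in the base-`p` representation of `n`. -/
def Np (p i n : ℕ) : ℕ := (Nat.digits p n).count i

/-- `Dcoef p r n` is the coefficient of `x^n` in `∏_{i=0}^∞ (1 - x^{p^i})^r`.
Since `p ≥ 2`, the factors with index `i > n` do not affect the coefficient of `x^n`,
so the product may be truncated at `i = n`. -/
noncomputable def Dcoef (p r n : ℕ) : ℤ :=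
  PowerSeries.coeff (R := ℤ) n (∏ i ∈ Finset.range (n + 1), (1 - PowerSeries.X ^ p ^ i) ^ r)

/-- `Dp p n = D_{p,p-1}(n)`. -/
noncomputable def Dp (p n : ℕ) : ℤ := Dcoef p (p - 1) n

/-- `Acoef m k n` is the coefficient of `x^n` in `∏_{i=0}^∞ (1 - x^{m^i})^{-k}`,
the number of `k`-colored `m`-ary partitions of `n`.  Here `(1 - X^{m^i})⁻¹` is
realized as `PowerSeries.invOfUnit (1 - X ^ m ^ i) 1`, and since `m ≥ 2` the factors
with index `i > n` do not affect the coefficient of `x^n`. -/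
noncomputable def Acoef (m k n : ℕ) : ℤ :=
  PowerSeries.coeff (R := ℤ) n
    (∏ i ∈ Finset.range (n + 1),
      (PowerSeries.invOfUnit (1 - PowerSeries.X ^ m ^ i) 1) ^ k)


section aux

lemma charP_psZMod (p : ℕ) [NeZero p] : CharP ((ZMod p)⟦X⟧) p :=
  charP_of_injective_ringHom (f := C (R := ZMod p))
    (fun a b h => by
      have := congrArg (constantCoeff (R := ZMod p)) h
      simpa using this) p

lemma aux_charp {p : ℕ} (hp : p.Prime) (m : ℕ) :
    (1 - X : (ZMod p)⟦X⟧) * ∏ i ∈ range m, (1 - X ^ p ^ i) ^ (p - 1) = 1 - X ^ p ^ m := by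
  haveI : Fact p.Prime := ⟨hp⟩
  haveI : CharP ((ZMod p)⟦X⟧) p := charP_psZMod p
  induction m with
  | zero => simp
  | succ m ih =>
    rw [prod_range_succ, ← mul_assoc, ih]
    have h1 : (1 - X ^ p ^ m : (ZMod p)⟦X⟧) * (1 - X ^ p ^ m) ^ (p - 1)
        = (1 - X ^ p ^ m) ^ p := by
      rw [← pow_succ']
      congr 1
      have := hp.two_le
      omega
    rw [h1, sub_pow_char, one_pow, ← pow_mul, ← pow_succ]

lemma aux2 {p : ℕ} (hp : p.Prime) (t m : ℕ) :
    (1 - X : (ZMod p)⟦X⟧) ^ t * ∏ i ∈ range m, (1 - X ^ p ^ i) ^ ((p - 1) * t)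
      = (1 - X ^ p ^ m) ^ t := by
  calc (1 - X : (ZMod p)⟦X⟧) ^ t * ∏ i ∈ range m, (1 - X ^ p ^ i) ^ ((p - 1) * t)
      = (1 - X : (ZMod p)⟦X⟧) ^ t * ∏ i ∈ range m, ((1 - X ^ p ^ i) ^ (p - 1)) ^ t := by
        simp_rw [← pow_mul]
    _ = ((1 - X : (ZMod p)⟦X⟧) * ∏ i ∈ range m, (1 - X ^ p ^ i) ^ (p - 1)) ^ t := by
        rw [mul_pow, prod_pow]
    _ = (1 - X ^ p ^ m) ^ t := by rw [aux_charp hp m]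

lemma map_eq_imp_dvd {p : ℕ} [NeZero p] {a b : ℤ⟦X⟧}
    (h : PowerSeries.map (Int.castRingHom (ZMod p)) a
       = PowerSeries.map (Int.castRingHom (ZMod p)) b) :
    (p : ℤ⟦X⟧) ∣ a - b := by
  have hc : ∀ n, (p : ℤ) ∣ coeff (R := ℤ) n (a - b) := by
    intro n
    have h2 := congrArg (coeff (R := ZMod p) n) h
    rw [coeff_map, coeff_map] at h2
    have h3 : ((coeff (R := ℤ) n (a - b) : ℤ) : ZMod p) = 0 := by
      rw [map_sub]
      push_cast
      rw [sub_eq_zero]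
      exact_mod_cast h2
    exact (ZMod.intCast_zmod_eq_zero_iff_dvd _ p).mp h3
  refine ⟨PowerSeries.mk (fun n => coeff (R := ℤ) n (a - b) / p), ?_⟩
  ext n
  have hpc : (p : ℤ⟦X⟧) = C (R := ℤ) (p : ℤ) := (map_natCast (C (R := ℤ)) p).symm
  rw [hpc, coeff_C_mul, coeff_mk]
  exact (Int.mul_ediv_cancel' (hc n)).symm

lemma coeff_one_sub_X_pow {R : Type*} [CommRing R] (s : ℕ) :
    ∀ n : ℕ, s < n → coeff (R := R) n ((1 - X) ^ s) = 0 := by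
  induction s with
  | zero =>
    intro n hn
    rw [pow_zero, coeff_one, if_neg hn.ne']
  | succ s ih =>
    intro n hn
    obtain ⟨m, rfl⟩ : ∃ m, n = m + 1 := ⟨n - 1, by omega⟩
    rw [pow_succ, mul_sub, mul_one, map_sub, coeff_succ_mul_X,
      ih _ (by omega), ih _ (by omega), sub_zero]

lemma key_dvd {p t : ℕ} (hp : p.Prime) (n : ℕ) (hn : t * p < n) :
    ((p : ℤ)) ^ 2 ∣ Acoef p (p * ((p - 1) * t)) n := by
  haveI : Fact p.Prime := ⟨hp⟩
  haveI : NeZero p := ⟨hp.pos.ne'⟩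
  have hp2 : 2 ≤ p := hp.two_le
  set k := p * ((p - 1) * t) with hk
  set R := ZMod (p ^ 2) with hR
  haveI : NeZero (p ^ 2) := ⟨pow_ne_zero 2 hp.pos.ne'⟩
  set φ : ℤ →+* R := Int.castRingHom R with hφ
  set m := n + 1 with hm
  set a : ℤ⟦X⟧ := (1 - X) ^ t * ∏ i ∈ range m, (1 - X ^ p ^ i) ^ ((p - 1) * t) with ha
  set b : ℤ⟦X⟧ := (1 - X ^ p ^ m) ^ t with hb
  have hmap : PowerSeries.map (Int.castRingHom (ZMod p)) a
      = PowerSeries.map (Int.castRingHom (ZMod p)) b := by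
    rw [ha, hb]
    simp only [map_mul, map_pow, map_sub, map_one, map_prod, PowerSeries.map_X]
    exact aux2 hp t m
  have hdvd1 : (p : ℤ⟦X⟧) ∣ a - b := map_eq_imp_dvd hmap
  have hdvd2 : ((p : ℤ⟦X⟧)) ^ 2 ∣ a ^ p - b ^ p := by
    have h := dvd_sub_pow_of_dvd_sub hdvd1 1
    simpa using h
  have hmapR : PowerSeries.map φ (a ^ p) = PowerSeries.map φ (b ^ p) := by
    ext j
    rw [coeff_map, coeff_map]
    obtain ⟨c, hc⟩ := hdvd2
    have hcc : coeff (R := ℤ) j (a ^ p) - coeff (R := ℤ) j (b ^ p) = (p : ℤ) ^ 2 * coeff (R := ℤ) j c := by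
      have h2 : coeff (R := ℤ) j (a ^ p - b ^ p) = coeff (R := ℤ) j (((p : ℤ⟦X⟧)) ^ 2 * c) := by rw [hc]
      have hpc : ((p : ℤ⟦X⟧)) ^ 2 = C (R := ℤ) ((p : ℤ) ^ 2) := by
        rw [← map_natCast (C (R := ℤ)) p, ← map_pow]
      rw [map_sub, hpc, coeff_C_mul] at h2
      exact h2
    have h0 : φ ((p : ℤ) ^ 2) = 0 := by
      have h5 : (((p : ℤ) ^ 2 : ℤ) : R) = ((p ^ 2 : ℕ) : R) := by push_cast; ring
      show (((p : ℤ) ^ 2 : ℤ) : R) = 0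
      rw [h5]; exact ZMod.natCast_self _
    have h4 : φ (coeff (R := ℤ) j (a ^ p) - coeff (R := ℤ) j (b ^ p)) = 0 := by
      rw [hcc, map_mul, h0, zero_mul]
    rw [map_sub] at h4
    exact sub_eq_zero.mp h4
  have hRid : (1 - X : R⟦X⟧) ^ (t * p) * ∏ i ∈ range m, (1 - X ^ p ^ i) ^ k
      = (1 - X ^ p ^ m) ^ (t * p) := by
    have h := hmapR
    rw [ha, hb] at h
    simp only [map_mul, map_pow, map_sub, map_one, map_prod, PowerSeries.map_X] at h
    have e1 : (1 - X : R⟦X⟧) ^ (t * p) = ((1 - X) ^ t) ^ p := by rw [← pow_mul]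
    have e2 : ∏ i ∈ range m, (1 - X ^ p ^ i : R⟦X⟧) ^ k
        = (∏ i ∈ range m, (1 - X ^ p ^ i) ^ ((p - 1) * t)) ^ p := by
      rw [← prod_pow]
      refine prod_congr rfl fun i _ => ?_
      rw [← pow_mul]
      congr 1
      rw [hk]; ring
    have e3 : (1 - X ^ p ^ m : R⟦X⟧) ^ (t * p) = ((1 - X ^ p ^ m) ^ t) ^ p := by
      rw [← pow_mul]
    rw [e1, e2, e3, ← mul_pow]
    rw [h]
  set B : R⟦X⟧ := PowerSeries.map φ
      (∏ i ∈ range m, (invOfUnit (1 - X ^ p ^ i : ℤ⟦X⟧) 1) ^ k) with hB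
  have hinv : (∏ i ∈ range m, (1 - X ^ p ^ i : ℤ⟦X⟧) ^ k) *
      (∏ i ∈ range m, (invOfUnit (1 - X ^ p ^ i : ℤ⟦X⟧) 1) ^ k) = 1 := by
    rw [← prod_mul_distrib]
    apply prod_eq_one
    intro i _
    rw [← mul_pow, PowerSeries.mul_invOfUnit, one_pow]
    simp only [map_sub, map_one, map_pow, constantCoeff_X]
    rw [zero_pow (pow_pos hp.pos i).ne']
    simp
  have hinvR : (∏ i ∈ range m, (1 - X ^ p ^ i : R⟦X⟧) ^ k) * B = 1 := by
    have h := congrArg (PowerSeries.map φ) hinv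
    rw [map_mul, map_one] at h
    have h6 : PowerSeries.map φ (∏ i ∈ range m, (1 - X ^ p ^ i : ℤ⟦X⟧) ^ k)
        = ∏ i ∈ range m, (1 - X ^ p ^ i : R⟦X⟧) ^ k := by
      simp only [map_prod, map_pow, map_sub, map_one, PowerSeries.map_X]
    rw [h6] at h
    rw [hB]
    exact h
  have hfin : (1 - X : R⟦X⟧) ^ (t * p) = (1 - X ^ p ^ m) ^ (t * p) * B := by
    calc (1 - X : R⟦X⟧) ^ (t * p)
        = (1 - X) ^ (t * p) * ((∏ i ∈ range m, (1 - X ^ p ^ i) ^ k) * B) := by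
          rw [hinvR, mul_one]
      _ = ((1 - X) ^ (t * p) * ∏ i ∈ range m, (1 - X ^ p ^ i) ^ k) * B := by ring
      _ = (1 - X ^ p ^ m) ^ (t * p) * B := by rw [hRid]
  have hnlt : n < p ^ m :=
    lt_of_lt_of_le (Nat.lt_two_pow_self (n := n))
      (le_trans (Nat.pow_le_pow_left hp2 n) (Nat.pow_le_pow_right hp.pos (Nat.le_succ n)))
  obtain ⟨c, hc⟩ := one_sub_dvd_one_sub_pow (1 - X ^ p ^ m : R⟦X⟧) (t * p)
  have hc' : (1 - X ^ p ^ m : R⟦X⟧) ^ (t * p) = 1 - X ^ p ^ m * c := by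
    have h7 : (1 : R⟦X⟧) - (1 - X ^ p ^ m) = X ^ p ^ m := by ring
    rw [h7] at hc
    linear_combination -hc
  have hcoe : coeff (R := R) n ((1 - X : R⟦X⟧) ^ (t * p)) = 0 := coeff_one_sub_X_pow _ _ hn
  rw [hfin, hc', sub_mul, one_mul, map_sub, mul_assoc,
    coeff_X_pow_mul', if_neg (not_le.mpr hnlt), sub_zero] at hcoe
  have hAc : coeff (R := R) n B = ((Acoef p k n : ℤ) : R) := by
    rw [hB, coeff_map]
    simp only [Acoef, hm]
    rfl
  rw [hAc] at hcoe
  have h8 := (ZMod.intCast_zmod_eq_zero_iff_dvd (Acoef p k n) (p ^ 2)).mp hcoe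
  have h9 : ((p ^ 2 : ℕ) : ℤ) = (p : ℤ) ^ 2 := by push_cast; ring
  rwa [h9] at h8

end aux

theorem stmt18 (p k : ℕ) (hp : p.Prime) (hp3 : 3 ≤ p) (hk : 1 ≤ k)
    (hev : ∃ N : ℕ, ∀ n : ℕ, N ≤ n → emultiplicity (p : ℤ) (Acoef p k n) = 1)
    (hdvd : (p - 1) ∣ k) : ¬ p ∣ k := by
  intro hpk
  obtain ⟨N, hN⟩ := hev
  have hco : Nat.Coprime p (p - 1) := by
    rw [Nat.Prime.coprime_iff_not_dvd hp]
    intro h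
    have := Nat.le_of_dvd (by omega) h
    omega
  have hmul : p * (p - 1) ∣ k := Nat.Coprime.mul_dvd_of_dvd_of_dvd hco hpk hdvd
  obtain ⟨t, ht⟩ := hmul
  set n := max N (t * p + 1) with hn
  have h1 := hN n (le_max_left _ _)
  have h2 : ((p : ℤ)) ^ 2 ∣ Acoef p k n := by
    have hk' : k = p * ((p - 1) * t) := by rw [ht]; ring
    rw [hk']
    exact key_dvd hp n (by have := le_max_right N (t * p + 1); omega)
  have h3 := le_emultiplicity_of_pow_dvd h2
  rw [h1] at h3
  norm_num at h3
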